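/- For a finite set K of S > 1 distinct positive integers, the set Δ0 = { Σ_{n≥1} 2(-1)^{n-1}/2^{a1+...+an} : a_i ∈ K } is a perfect set (closed with no isolated points). -/

import Mathlib

open Filter Topology

/-- Partial sum `a 0 + ... + a n` of a digit sequence. -/
noncomputable def psum (a : ℕ → ℕ) (n : ℕ) : ℕ := ∑ i ∈ Finset.range (n + 1), a i

/-- Value of the alternating series `Σ_{n≥1} 2(-1)^{n-1}/2^{a1+...+an}`. -/
noncomputable def val (a : ℕ → ℕ) : ℝ := ∑' n : ℕ, (2 * (-1 : ℝ) ^ n) / 2 ^ (psum a n)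

/-- The set `Δ0` of all values of the alternating series over `K`-valued digit sequences. -/
noncomputable def Delta0 (K : Set ℕ) : Set ℝ :=
  { y | ∃ a : ℕ → ℕ, (∀ i, a i ∈ K) ∧ y = val a }

namespace Delta0Aux

noncomputable def g (a : ℕ → ℕ) (n : ℕ) : ℝ := 1 / 2 ^ psum a n

lemma psum_succ (a : ℕ → ℕ) (n : ℕ) : psum a (n + 1) = psum a n + a (n + 1) :=
  Finset.sum_range_succ a (n + 1)

variable {a b : ℕ → ℕ}

lemma lt_psum (h : ∀ i, 1 ≤ a i) (n : ℕ) : n + 1 ≤ psum a n := by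
  induction n with
  | zero => simpa [psum] using h 0
  | succ n ih => rw [psum_succ]; have := h (n + 1); omega

lemma g_pos (a : ℕ → ℕ) (n : ℕ) : 0 < g a n := by unfold g; positivity

lemma g_le_of_le {m n : ℕ} (hm : m ≤ psum a n) : g a n ≤ 1 / 2 ^ m := by
  apply one_div_le_one_div_of_le (by positivity)
  exact_mod_cast Nat.pow_le_pow_right (by norm_num) hm

lemma g_succ_le (h : ∀ i, 1 ≤ a i) (n : ℕ) : g a (n + 1) ≤ g a n / 2 := by
  have h1 : psum a n + 1 ≤ psum a (n + 1) := by rw [psum_succ]; have := h (n + 1); omega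
  have := g_le_of_le (a := a) h1
  rwa [pow_succ, ← div_div, g] at this

lemma g_anti (h : ∀ i, 1 ≤ a i) (n : ℕ) : g a (n + 1) ≤ g a n := by
  have := g_succ_le h n
  have := g_pos a n
  linarith

lemma g_le (h : ∀ i, 1 ≤ a i) (n : ℕ) : g a n ≤ (1 / 2 : ℝ) ^ (n + 1) := by
  have := g_le_of_le (a := a) (lt_psum h n)
  rw [show ((1:ℝ)/2) ^ (n+1) = 1 / 2 ^ (n+1) by rw [div_pow, one_pow]]
  exact this

lemma summable_tail (h : ∀ i, 1 ≤ a i) (N : ℕ) :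
    Summable fun m : ℕ => (-1 : ℝ) ^ m * g a (N + m) := by
  have hgeo : Summable fun m : ℕ => (1 / 2 : ℝ) ^ m :=
    summable_geometric_of_lt_one (by norm_num) (by norm_num)
  apply Summable.of_norm_bounded hgeo
  intro m
  rw [norm_mul, norm_pow, norm_neg, norm_one, one_pow, one_mul,
    Real.norm_of_nonneg (g_pos a _).le]
  calc g a (N + m) ≤ (1 / 2 : ℝ) ^ (N + m + 1) := g_le h _
    _ ≤ (1 / 2 : ℝ) ^ m := by
        apply pow_le_pow_of_le_one (by norm_num) (by norm_num); omega

noncomputable def A (a : ℕ → ℕ) (N : ℕ) : ℝ := ∑' m : ℕ, (-1 : ℝ) ^ m * g a (N + m)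

set_option maxHeartbeats 1000000 in
lemma A_peel (h : ∀ i, 1 ≤ a i) (N : ℕ) : A a N = g a N - A a (N + 1) := by
  have hshift : (fun m : ℕ => (-1 : ℝ) ^ (m + 1) * g a (N + (m + 1)))
      = fun m : ℕ => -((-1 : ℝ) ^ m * g a ((N + 1) + m)) := by
    funext m
    rw [show N + (m + 1) = (N + 1) + m by omega, pow_succ]
    ring
  have hs : Summable fun m : ℕ => (-1 : ℝ) ^ (m + 1) * g a (N + (m + 1)) := by
    rw [hshift]; exact (summable_tail h (N + 1)).neg
  rw [A, tsum_eq_zero_add' hs]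
  simp only [pow_zero, one_mul, Nat.add_zero]
  rw [hshift, tsum_neg, ← sub_eq_add_neg, A]

lemma A_lower (h : ∀ i, 1 ≤ a i) (N : ℕ) : g a N - g a (N + 1) ≤ A a N := by
  set f : ℕ → ℝ := fun m => (-1 : ℝ) ^ m * g a (N + m) with hf
  have hsum := summable_tail h N
  have he : Summable fun k : ℕ => f (2 * k) :=
    hsum.comp_injective (mul_right_injective₀ (two_ne_zero))
  have ho : Summable fun k : ℕ => f (2 * k + 1) :=
    hsum.comp_injective fun x y hxy => by omega
  have hA : A a N = ∑' k : ℕ, (f (2 * k) + f (2 * k + 1)) := by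
    rw [A, ← tsum_even_add_odd he ho, ← Summable.tsum_add he ho]
  have hterm : ∀ k : ℕ, f (2 * k) + f (2 * k + 1)
      = g a (N + 2 * k) - g a (N + 2 * k + 1) := by
    intro k
    have h1 : (-1 : ℝ) ^ (2 * k) = 1 := by rw [pow_mul]; norm_num
    have h2 : (-1 : ℝ) ^ (2 * k + 1) = -1 := by rw [pow_succ, h1]; norm_num
    simp only [hf, h1, h2, Nat.add_assoc]
    ring
  have hnn : ∀ k : ℕ, 0 ≤ f (2 * k) + f (2 * k + 1) := by
    intro k
    rw [hterm k]
    have := g_anti h (N + 2 * k)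
    linarith
  have h0 : f (2 * 0) + f (2 * 0 + 1) ≤ ∑' k : ℕ, (f (2 * k) + f (2 * k + 1)) :=
    Summable.le_tsum (he.add ho) 0 fun k _ => hnn k
  rw [hA]
  calc g a N - g a (N + 1) = f (2 * 0) + f (2 * 0 + 1) := by
        rw [hterm 0]; norm_num
    _ ≤ _ := h0

lemma A_upper (h : ∀ i, 1 ≤ a i) (N : ℕ) : A a N ≤ g a N - g a (N + 1) / 2 := by
  have h1 := A_lower h (N + 1)
  have h2 := g_succ_le h (N + 1)
  rw [A_peel h N]
  linarith

lemma A_pos (h : ∀ i, 1 ≤ a i) (N : ℕ) : 0 < A a N := by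
  have h1 := A_lower h N
  have h2 := g_succ_le h N
  have h3 := g_pos a N
  linarith

lemma A_le_g (h : ∀ i, 1 ≤ a i) (N : ℕ) : A a N ≤ g a N := by
  have := A_upper h N
  have := g_pos a (N + 1)
  linarith

lemma summable_val (h : ∀ i, 1 ≤ a i) :
    Summable fun n : ℕ => (2 * (-1 : ℝ) ^ n) / 2 ^ (psum a n) := by
  have := (summable_tail h 0).mul_left 2
  apply this.congr
  intro n
  simp only [Nat.zero_add, g]
  ring

lemma val_eq (h : ∀ i, 1 ≤ a i) (N : ℕ) :
    val a = (∑ n ∈ Finset.range N, (2 * (-1 : ℝ) ^ n) / 2 ^ (psum a n))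
      + 2 * (-1 : ℝ) ^ N * A a N := by
  have hshift : (fun m : ℕ => (2 * (-1 : ℝ) ^ (m + N)) / 2 ^ (psum a (m + N)))
      = fun m : ℕ => (2 * (-1 : ℝ) ^ N) * ((-1 : ℝ) ^ m * g a (N + m)) := by
    funext m
    rw [show m + N = N + m by omega, pow_add, g]
    ring
  have hs : Summable fun m : ℕ => (2 * (-1 : ℝ) ^ (m + N)) / 2 ^ (psum a (m + N)) := by
    rw [hshift]; exact (summable_tail h N).mul_left _
  rw [val, ← Summable.sum_add_tsum_nat_add' (f := fun n : ℕ => (2 * (-1 : ℝ) ^ n) / 2 ^ (psum a n))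
    (k := N) hs]
  congr 1
  rw [hshift, tsum_mul_left, A]

lemma psum_congr {N : ℕ} (hab : ∀ i < N, a i = b i) {n : ℕ} (hn : n < N) :
    psum a n = psum b n := by
  apply Finset.sum_congr rfl
  intro i hi
  exact hab i (by have := Finset.mem_range.mp hi; omega)

lemma val_sub (ha : ∀ i, 1 ≤ a i) (hb : ∀ i, 1 ≤ b i) {N : ℕ}
    (hab : ∀ i < N, a i = b i) :
    val a - val b = 2 * (-1 : ℝ) ^ N * (A a N - A b N) := by
  rw [val_eq ha N, val_eq hb N]
  have : (∑ n ∈ Finset.range N, (2 * (-1 : ℝ) ^ n) / 2 ^ (psum a n))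
      = ∑ n ∈ Finset.range N, (2 * (-1 : ℝ) ^ n) / 2 ^ (psum b n) := by
    apply Finset.sum_congr rfl
    intro n hn
    rw [psum_congr hab (Finset.mem_range.mp hn)]
  rw [this]
  ring

lemma val_dist (ha : ∀ i, 1 ≤ a i) (hb : ∀ i, 1 ≤ b i) {N : ℕ}
    (hab : ∀ i < N, a i = b i) :
    |val a - val b| ≤ (1 / 2 : ℝ) ^ N := by
  rw [val_sub ha hb hab, abs_mul, abs_mul, abs_pow, abs_neg, abs_one, one_pow, mul_one]
  have h1 : A a N ≤ (1 / 2 : ℝ) ^ (N + 1) := (A_le_g ha N).trans (g_le ha N)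
  have h2 : A b N ≤ (1 / 2 : ℝ) ^ (N + 1) := (A_le_g hb N).trans (g_le hb N)
  have h3 := A_pos ha N
  have h4 := A_pos hb N
  have h5 : |A a N - A b N| ≤ (1 / 2 : ℝ) ^ (N + 1) :=
    abs_le.mpr ⟨by linarith, by linarith⟩
  calc |(2 : ℝ)| * |A a N - A b N| ≤ 2 * (1 / 2 : ℝ) ^ (N + 1) := by
        rw [abs_two]; linarith
    _ = (1 / 2 : ℝ) ^ N := by rw [pow_succ]; ring

lemma A_lt (ha : ∀ i, 1 ≤ a i) (hb : ∀ i, 1 ≤ b i) {N : ℕ}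
    (hab : ∀ i < N, a i = b i) (hN : a N < b N) : A b N < A a N := by
  have hp : psum a N + 1 ≤ psum b N := by
    have : psum a N = (∑ i ∈ Finset.range N, b i) + a N := by
      rw [psum, Finset.sum_range_succ]
      congr 1
      exact Finset.sum_congr rfl fun i hi => hab i (Finset.mem_range.mp hi)
    rw [this, psum, Finset.sum_range_succ]
    omega
  have hg : g b N ≤ g a N / 2 := by
    have := g_le_of_le (a := b) hp
    rwa [pow_succ, ← div_div, g] at this
  have h1 : g a N - g a (N + 1) ≤ A a N := A_lower ha N
  have h2 : A b N ≤ g b N - g b (N + 1) / 2 := A_upper hb N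
  have h3 := g_succ_le ha N
  have h4 := g_pos b (N + 1)
  linarith

lemma val_ne (ha : ∀ i, 1 ≤ a i) (hb : ∀ i, 1 ≤ b i) {N : ℕ}
    (hab : ∀ i < N, a i = b i) (hN : a N ≠ b N) : val a ≠ val b := by
  have key : A b N < A a N ∨ A a N < A b N := by
    rcases lt_or_gt_of_ne hN with h | h
    · exact Or.inl (A_lt ha hb hab h)
    · exact Or.inr (A_lt hb ha (fun i hi => (hab i hi).symm) h)
  intro hv
  have hsub := val_sub ha hb hab
  rw [hv, sub_self] at hsub
  have h2 : (2 * (-1 : ℝ) ^ N) ≠ 0 :=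
    mul_ne_zero two_ne_zero (pow_ne_zero _ (by norm_num))
  have h3 : A a N - A b N = 0 := (mul_eq_zero.mp hsub.symm).resolve_left h2
  rcases key with h | h <;> linarith

end Delta0Aux

open Delta0Aux in
theorem Delta0_perfect (K : Finset ℕ) (hcard : 1 < K.card) (hpos : ∀ k ∈ K, 0 < k) :
    Perfect (Delta0 ↑K) := by
  have hone : ∀ a : ℕ → ℕ, (∀ i, a i ∈ (K : Set ℕ)) → ∀ i, 1 ≤ a i :=
    fun a ha i => hpos _ (ha i)
  constructor
  · -- closed
    have hset : Delta0 ↑K = val '' (Set.pi Set.univ fun _ : ℕ => (K : Set ℕ)) := by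
      ext y
      constructor
      · rintro ⟨a, ha, rfl⟩; exact ⟨a, fun i _ => ha i, rfl⟩
      · rintro ⟨a, ha, rfl⟩; exact ⟨a, fun i => ha i (Set.mem_univ i), rfl⟩
    rw [hset]
    apply IsCompact.isClosed
    apply IsCompact.image_of_continuousOn
      (isCompact_univ_pi fun _ => K.finite_toSet.isCompact)
    intro a ha
    have ha' : ∀ i, 1 ≤ a i := hone a (fun i => ha i (Set.mem_univ i))
    rw [ContinuousWithinAt, Metric.tendsto_nhds]
    intro ε hε
    obtain ⟨N, hN⟩ := exists_pow_lt_of_lt_one hε (by norm_num : (1 / 2 : ℝ) < 1)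
    have hU : IsOpen ((Set.Iio N).pi fun i => ({a i} : Set ℕ)) :=
      isOpen_set_pi (Set.finite_Iio N) fun i _ => isOpen_discrete _
    have haU : a ∈ (Set.Iio N).pi fun i => ({a i} : Set ℕ) := fun i _ => rfl
    filter_upwards [self_mem_nhdsWithin,
      mem_nhdsWithin_of_mem_nhds (hU.mem_nhds haU)] with b hbS hbU
    have hb' : ∀ i, 1 ≤ b i := hone b (fun i => hbS i (Set.mem_univ i))
    have hab : ∀ i < N, b i = a i := fun i hi => hbU i hi
    rw [Real.dist_eq]
    calc |val b - val a| ≤ (1 / 2 : ℝ) ^ N := val_dist hb' ha' hab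
      _ < ε := hN
  · -- preperfect
    rw [preperfect_iff_nhds]
    rintro x ⟨a, ha, rfl⟩ U hU
    obtain ⟨ε, hε, hball⟩ := Metric.mem_nhds_iff.mp hU
    have ha' : ∀ i, 1 ≤ a i := hone a ha
    obtain ⟨N, hN⟩ := exists_pow_lt_of_lt_one hε (by norm_num : (1 / 2 : ℝ) < 1)
    obtain ⟨k, hk, hkne⟩ := Finset.exists_mem_ne hcard (a N)
    set b : ℕ → ℕ := Function.update a N k with hbdef
    have hbK : ∀ i, b i ∈ (K : Set ℕ) := by
      intro i
      rcases eq_or_ne i N with rfl | h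
      · simpa [hbdef] using hk
      · simpa [hbdef, Function.update_of_ne h] using ha i
    have hb' : ∀ i, 1 ≤ b i := hone b hbK
    have hab : ∀ i < N, b i = a i := fun i hi =>
      Function.update_of_ne (by omega) _ _
    have hne : val b ≠ val a := by
      apply val_ne hb' ha' hab
      simpa [hbdef] using hkne
    refine ⟨val b, ⟨hball ?_, ⟨b, hbK, rfl⟩⟩, hne⟩
    rw [Metric.mem_ball, Real.dist_eq]
    calc |val b - val a| ≤ (1 / 2 : ℝ) ^ N := val_dist hb' ha' hab
      _ < ε := hN
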